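/- As k → ∞, p_k converges to p_*, the smallest root of B_{r,s}(p) − 2p + 1 = 0 in (0,1]. -/

import Mathlib

/-- `B r s p = ∑_{i=0}^{s-1} C(r,i) p^{r-i} (1-p)^i`, the probability that a
Binomial(r,p) random variable exceeds `r - s`. -/
noncomputable def B (r s : ℕ) (p : ℝ) : ℝ :=
  ∑ i ∈ Finset.range s, (r.choose i : ℝ) * p ^ (r - i) * (1 - p) ^ i

/-- `f k (x, p) = (k+1) B_{r,s}(p) - k B_{r,s}(x) - 2x + 1`. -/
noncomputable def f (r s k : ℕ) (x p : ℝ) : ℝ :=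
  ((k : ℝ) + 1) * B r s p - (k : ℝ) * B r s x - 2 * x + 1




lemma B_continuous (r s : ℕ) : Continuous (B r s) := by
  unfold B; exact continuous_finset_sum _ fun i _ => by fun_prop

lemma B_zero (r s : ℕ) (hrs : s ≤ r) : B r s 0 = 0 := by
  unfold B
  apply Finset.sum_eq_zero
  intro i hi
  have : r - i ≠ 0 := by have := Finset.mem_range.mp hi; omega
  simp [zero_pow this]

/-- auxiliary telescoping function -/
noncomputable def Bw (r : ℕ) (x : ℝ) : ℕ → ℝ
  | 0 => 0
  | (j+1) => (r : ℝ) * ((r-1).choose j : ℝ) * x ^ (r-1-j) * (1-x) ^ j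

lemma hasDerivAt_B (r s : ℕ) (hs : 1 ≤ s) (hrs : s ≤ r) (x : ℝ) :
    HasDerivAt (B r s) ((r:ℝ) * ((r-1).choose (s-1) : ℝ) * x ^ (r-s) * (1-x) ^ (s-1)) x := by
  have hterm : ∀ i ∈ Finset.range s,
      HasDerivAt (fun y : ℝ => (r.choose i : ℝ) * y ^ (r-i) * (1-y)^i)
        (Bw r x (i+1) - Bw r x i) x := by
    intro i hi
    have hi' : i < r := lt_of_lt_of_le (Finset.mem_range.mp hi) hrs
    have h1 : HasDerivAt (fun y : ℝ => (r.choose i : ℝ) * y ^ (r-i))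
        ((r.choose i : ℝ) * (((r-i : ℕ):ℝ) * x ^ (r-i-1))) x :=
      (hasDerivAt_pow (r-i) x).const_mul _
    have h2 : HasDerivAt (fun y : ℝ => (1-y)^i) ((i:ℝ) * (1-x)^(i-1) * (-1)) x := by
      simpa using ((hasDerivAt_id x).const_sub 1).fun_pow i
    have h := h1.fun_mul h2
    refine h.congr_deriv (Eq.symm ?_)
    match i with
    | 0 => simp [Bw]
    | j+1 =>
      have hr1 : r - 1 + 1 = r := by omega
      have e1 : r * ((r-1).choose (j+1)) = r.choose (j+1) * (r - (j+1)) := by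
        calc r * ((r-1).choose (j+1)) = (r-1).succ * ((r-1).choose (j+1)) := by rw [Nat.succ_eq_add_one, hr1]
          _ = (r-1+1).choose (j+2) * (j+2) := Nat.add_one_mul_choose_eq _ _
          _ = r.choose (j+1) * (r - (j+1)) := by rw [hr1]; exact Nat.choose_succ_right_eq r (j+1)
      have e2 : r * ((r-1).choose j) = r.choose (j+1) * (j+1) := by
        calc r * ((r-1).choose j) = (r-1).succ * ((r-1).choose j) := by rw [Nat.succ_eq_add_one, hr1]
          _ = (r-1+1).choose (j+1) * (j+1) := Nat.add_one_mul_choose_eq _ _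
          _ = r.choose (j+1) * (j+1) := by rw [hr1]
      have E1 : (r:ℝ) * ((r-1).choose (j+1) : ℝ) = (r.choose (j+1) : ℝ) * ((r - (j+1) : ℕ) : ℝ) := by
        exact_mod_cast congrArg (Nat.cast : ℕ → ℝ) e1
      have E2 : (r:ℝ) * ((r-1).choose j : ℝ) = (r.choose (j+1) : ℝ) * ((j:ℝ)+1) := by
        exact_mod_cast congrArg (Nat.cast : ℕ → ℝ) e2
      have ex1 : r - 1 - (j+1) = r - (j+1) - 1 := by omega
      have ex2 : r - 1 - j = r - (j+1) := by omega
      show Bw r x (j+2) - Bw r x (j+1) = _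
      simp only [Bw, ex1, ex2]
      push_cast
      linear_combination (x ^ (r - (j+1) - 1) * (1-x)^(j+1)) * E1 - (x ^ (r-(j+1)) * (1-x)^j) * E2
  have hsum := HasDerivAt.fun_sum hterm
  obtain ⟨t, rfl⟩ : ∃ t, s = t + 1 := ⟨s-1, by omega⟩
  have : B r (t+1) = fun y => ∑ i ∈ Finset.range (t+1), (r.choose i : ℝ) * y ^ (r-i) * (1-y)^i := rfl
  rw [this]
  refine hsum.congr_deriv (Eq.symm ?_)
  rw [Finset.sum_range_sub (Bw r x)]
  have ex : r - (t+1) = r - 1 - t := by omega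
  simp [Bw, ex]

lemma B_strictMonoOn (r s : ℕ) (hs : 1 ≤ s) (hrs : s ≤ r) :
    StrictMonoOn (B r s) (Set.Icc 0 1) := by
  apply strictMonoOn_of_deriv_pos (convex_Icc 0 1) (B_continuous r s).continuousOn
  intro x hx
  rw [interior_Icc] at hx
  rw [(hasDerivAt_B r s hs hrs x).deriv]
  have hc : 0 < ((r-1).choose (s-1) : ℝ) := by exact_mod_cast Nat.choose_pos (by omega)
  have hr : (0:ℝ) < r := by exact_mod_cast (by omega : 0 < r)
  exact mul_pos (mul_pos (mul_pos hr hc) (pow_pos hx.1 _)) (pow_pos (by linarith [hx.2] : (0:ℝ) < 1 - x) _)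



/-- As `k → ∞`, `p_k` converges to `p_*`, the smallest root of
`B_{r,s}(p) - 2p + 1 = 0` in `(0,1]`. -/
theorem stmt_3 (r s : ℕ) (hs : 1 ≤ s) (hrs : s ≤ r) (p : ℕ → ℝ)
    (hp0 : p 0 = 0)
    (hp : ∀ k, 1 ≤ k → p k ∈ Set.Ioo (0 : ℝ) 1 ∧ f r s k (p k) (p (k - 1)) = 0)
    (pstar : ℝ)
    (hpstar : IsLeast {q : ℝ | q ∈ Set.Ioc (0 : ℝ) 1 ∧ B r s q - 2 * q + 1 = 0} pstar) :
    Filter.Tendsto p Filter.atTop (nhds pstar) := by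
  obtain ⟨⟨hpsIoc, hgstar⟩, hleast⟩ := hpstar
  obtain ⟨hps0, hps1⟩ := hpsIoc
  have hBsm := B_strictMonoOn r s hs hrs
  have hBmono := hBsm.monotoneOn
  have hBcont := B_continuous r s
  -- g > 0 on [0, pstar)
  have gpos : ∀ x : ℝ, 0 ≤ x → x < pstar → 0 < B r s x - 2 * x + 1 := by
    intro x hx0 hxs
    by_contra h
    push_neg at h
    have hIVT := intermediate_value_Icc' hx0 (by fun_prop : ContinuousOn (fun y => B r s y - 2*y + 1) (Set.Icc 0 x))
    have h0 : B r s 0 - 2 * 0 + 1 = 1 := by rw [B_zero r s hrs]; ring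
    have hmem : (0:ℝ) ∈ Set.Icc (B r s x - 2*x + 1) (B r s 0 - 2*0 + 1) := by
      constructor
      · exact h
      · rw [h0]; norm_num
    obtain ⟨z, hz, hz0⟩ := hIVT hmem
    simp only [] at hz0
    have hzne : z ≠ 0 := by
      intro hzz
      rw [hzz, h0] at hz0
      norm_num at hz0
    have hzle : z ≤ x := hz.2
    have : pstar ≤ z := hleast ⟨⟨lt_of_le_of_ne hz.1 (Ne.symm hzne), by linarith⟩, hz0⟩
    linarith
  -- key recurrence: for each k, (k+2)(B p_{k+1} - B p_k) = g(p_{k+1})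
  have key : ∀ k : ℕ, B r s (p (k+1)) - 2 * p (k+1) + 1
      = ((k:ℝ) + 2) * (B r s (p (k+1)) - B r s (p k)) := by
    intro k
    have hf := (hp (k+1) (by omega)).2
    unfold f at hf
    simp only [Nat.add_sub_cancel] at hf
    push_cast at hf
    linear_combination hf
  -- bounds 0 ≤ p k < pstar
  have hQ : ∀ k, 0 ≤ p k ∧ p k < pstar := by
    intro k
    induction k with
    | zero => exact ⟨by rw [hp0], by rw [hp0]; exact hps0⟩
    | succ k ih =>
      obtain ⟨hk0, hkst⟩ := ih
      obtain ⟨hmem, hfeq⟩ := hp (k+1) (by omega)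
      simp only [Nat.add_sub_cancel] at hfeq
      refine ⟨hmem.1.le, ?_⟩
      by_contra hge
      push_neg at hge
      unfold f at hfeq
      push_cast at hfeq
      have hIk : p k ∈ Set.Icc (0:ℝ) 1 := ⟨hk0, by linarith⟩
      have hIs : pstar ∈ Set.Icc (0:ℝ) 1 := ⟨hps0.le, hps1⟩
      have hIk1 : p (k+1) ∈ Set.Icc (0:ℝ) 1 := ⟨hmem.1.le, hmem.2.le⟩
      have h1 : B r s pstar ≤ B r s (p (k+1)) := hBmono hIs hIk1 hge
      have h2 : B r s (p k) < B r s pstar := hBsm hIk hIs hkst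
      have hK : (0:ℝ) ≤ (k:ℝ) := Nat.cast_nonneg k
      nlinarith [mul_le_mul_of_nonneg_left h1 (by linarith : (0:ℝ) ≤ (k:ℝ)+1),
        mul_lt_mul_of_pos_left h2 (by linarith : (0:ℝ) < (k:ℝ)+2)]
    -- strict monotonicity
  have hmonoS : ∀ k, p k < p (k+1) := by
    intro k
    obtain ⟨hk0, hkst⟩ := hQ k
    obtain ⟨hmem, _⟩ := hp (k+1) (by omega)
    by_contra h
    push_neg at h
    have hIk : p k ∈ Set.Icc (0:ℝ) 1 := ⟨hk0, by linarith⟩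
    have hIk1 : p (k+1) ∈ Set.Icc (0:ℝ) 1 := ⟨hmem.1.le, hmem.2.le⟩
    have hBle : B r s (p (k+1)) ≤ B r s (p k) := hBmono hIk1 hIk h
    have hg : 0 < B r s (p (k+1)) - 2 * p (k+1) + 1 :=
      gpos _ hmem.1.le (lt_of_le_of_lt h hkst)
    have hK : (0:ℝ) < (k:ℝ) + 2 := by positivity
    nlinarith [key k]
  have hmonoP : Monotone p := monotone_nat_of_le_succ fun k => (hmonoS k).le
  have hbdd : BddAbove (Set.range p) := ⟨pstar, by rintro _ ⟨k, rfl⟩; exact (hQ k).2.le⟩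
  have htend : Filter.Tendsto p Filter.atTop (nhds (⨆ k, p k)) :=
    tendsto_atTop_ciSup hmonoP hbdd
  set L := ⨆ k, p k with hLdef
  have hLle : L ≤ pstar := ciSup_le fun k => (hQ k).2.le
  have hL0 : 0 ≤ L := le_trans (by rw [hp0]) (le_ciSup hbdd 0)
  suffices hLeq : L = pstar by rwa [hLeq] at htend
  by_contra hne
  have hLlt : L < pstar := lt_of_le_of_ne hLle hne
  set c := B r s L - 2 * L + 1 with hcdef
  have hc : 0 < c := gpos L hL0 hLlt
  have htB : Filter.Tendsto (fun k => B r s (p k)) Filter.atTop (nhds (B r s L)) :=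
    (hBcont.tendsto L).comp htend
  have htg : Filter.Tendsto (fun k => B r s (p k) - 2 * p k + 1) Filter.atTop (nhds c) := by
    have : Filter.Tendsto (fun k => 2 * p k) Filter.atTop (nhds (2 * L)) :=
      htend.const_mul 2
    simpa using (htB.sub this).add_const 1
  have hev : ∀ᶠ k in Filter.atTop, c / 2 < B r s (p k) - 2 * p k + 1 :=
    htg.eventually (eventually_gt_nhds (by linarith))
  obtain ⟨K, hK⟩ := Filter.eventually_atTop.mp hev
  -- block sum lower bound
  have hlow : ∀ n : ℕ, K ≤ n → 1 ≤ n → c / 6 ≤ B r s (p (2*n)) - B r s (p n) := by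
    intro n hKn h1n
    have hsum : ∑ i ∈ Finset.range n, (B r s (p (n+i+1)) - B r s (p (n+i)))
        = B r s (p (2*n)) - B r s (p n) := by
      have h := Finset.sum_range_sub (fun i => B r s (p (n+i))) n
      simpa [two_mul, Nat.add_assoc] using h
    rw [← hsum]
    have hterm : ∀ i ∈ Finset.range n, (c/2) / (2*(n:ℝ)+1) ≤ B r s (p (n+i+1)) - B r s (p (n+i)) := by
      intro i hi
      have hin : i < n := Finset.mem_range.mp hi
      have hkey := key (n+i)
      have hg : c/2 < B r s (p (n+i+1)) - 2 * p (n+i+1) + 1 := hK (n+i+1) (by omega)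
      have hden : (0:ℝ) < ((n:ℝ)+(i:ℝ)) + 2 := by positivity
      have hden2 : ((n:ℝ)+(i:ℝ)) + 2 ≤ 2*(n:ℝ)+1 := by
        have : (i:ℝ) ≤ (n:ℝ) - 1 := by
          have : (i:ℝ) + 1 ≤ (n:ℝ) := by exact_mod_cast hin
          linarith
        linarith
      have heq : B r s (p (n+i+1)) - B r s (p (n+i))
          = (B r s (p (n+i+1)) - 2 * p (n+i+1) + 1) / (((n:ℝ)+(i:ℝ)) + 2) := by
        rw [eq_div_iff (ne_of_gt hden)]
        push_cast at hkey ⊢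
        linarith [hkey]
      rw [heq]
      exact div_le_div₀ (by linarith) hg.le hden hden2
    calc c / 6 ≤ (n:ℝ) * ((c/2) / (2*(n:ℝ)+1)) := by
          have hn1 : (1:ℝ) ≤ (n:ℝ) := by exact_mod_cast h1n
          have hden : (0:ℝ) < 2*(n:ℝ)+1 := by linarith
          rw [← mul_div_assoc, div_le_div_iff₀ (by norm_num) hden]
          nlinarith
      _ ≤ ∑ i ∈ Finset.range n, (B r s (p (n+i+1)) - B r s (p (n+i))) := by
          have := Finset.card_nsmul_le_sum (Finset.range n) _ _ hterm
          simpa [nsmul_eq_mul] using this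
  -- but the difference tends to 0
  have h2n : Filter.Tendsto (fun n : ℕ => 2*n) Filter.atTop Filter.atTop := by
    apply Filter.tendsto_atTop_atTop.mpr
    intro b
    exact ⟨b, fun a ha => by omega⟩
  have hdiff : Filter.Tendsto (fun n => B r s (p (2*n)) - B r s (p n)) Filter.atTop (nhds 0) := by
    have := (htB.comp h2n).sub htB
    simpa using this
  have hev2 : ∀ᶠ n in Filter.atTop, B r s (p (2*n)) - B r s (p n) < c/6 :=
    hdiff.eventually (eventually_lt_nhds (by linarith))
  obtain ⟨N, hN⟩ := Filter.eventually_atTop.mp hev2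
  have hcon := hlow (max (max K 1) N) (le_trans (le_max_left K 1) (le_max_left _ N))
    (le_trans (le_max_right K 1) (le_max_left _ N))
  have hcon2 := hN (max (max K 1) N) (le_max_right _ N)
  linarith
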